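/- Let U, V be finite-dimensional vector spaces over a field, φ : U → V, ψ : V → U linear. If ψ ∘ φ is diagonalizable with nonzero eigenvalues λ_1, ..., λ_t, then the minimal polynomial of φ ∘ ψ divides (x − λ_1)···(x − λ_t)·x². -/

import Mathlib

open Polynomial

private lemma pow_comp {F : Type*} [Field F] {U V : Type*}
    [AddCommGroup U] [Module F U] [AddCommGroup V] [Module F V]
    (φ : U →ₗ[F] V) (ψ : V →ₗ[F] U) (n : ℕ) :
    φ ∘ₗ ((ψ ∘ₗ φ) ^ n : Module.End F U) = ((φ ∘ₗ ψ) ^ n : Module.End F V) ∘ₗ φ := by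
  induction n with
  | zero => ext x; simp
  | succ n ih =>
    rw [pow_succ, pow_succ]
    show φ ∘ₗ (((ψ ∘ₗ φ) ^ n : Module.End F U) ∘ₗ (ψ ∘ₗ φ)) = _
    show _ = (((φ ∘ₗ ψ) ^ n : Module.End F V) ∘ₗ (φ ∘ₗ ψ)) ∘ₗ φ
    rw [← LinearMap.comp_assoc, ih]
    ext x; simp [LinearMap.comp_apply]

private lemma aeval_comp {F : Type*} [Field F] {U V : Type*}
    [AddCommGroup U] [Module F U] [AddCommGroup V] [Module F V]
    (φ : U →ₗ[F] V) (ψ : V →ₗ[F] U) (p : F[X]) :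
    φ ∘ₗ (aeval (ψ ∘ₗ φ) p : Module.End F U) = (aeval (φ ∘ₗ ψ) p : Module.End F V) ∘ₗ φ := by
  induction p using Polynomial.induction_on' with
  | add p q hp hq =>
    rw [map_add, map_add, LinearMap.comp_add, LinearMap.add_comp, hp, hq]
  | monomial n c =>
    simp only [aeval_monomial]
    ext x
    have h := congrFun (congrArg DFunLike.coe (pow_comp φ ψ n)) x
    simp only [LinearMap.comp_apply] at h ⊢
    simp only [Module.End.mul_apply, Module.algebraMap_end_apply, LinearMap.smul_apply] at *
    rw [map_smul, h]

theorem stmt_6 {F : Type*} [Field F] {U V : Type*}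
    [AddCommGroup U] [Module F U] [FiniteDimensional F U]
    [AddCommGroup V] [Module F V] [FiniteDimensional F V]
    (φ : U →ₗ[F] V) (ψ : V →ₗ[F] U) (Λ : Finset F) (h0 : (0 : F) ∉ Λ)
    (hdiag : ⨆ μ : F, Module.End.eigenspace (ψ ∘ₗ φ) μ = ⊤)
    (hΛ : ∀ μ : F, μ ≠ 0 → (Module.End.HasEigenvalue (ψ ∘ₗ φ) μ ↔ μ ∈ Λ)) :
    minpoly F (φ ∘ₗ ψ) ∣ (∏ μ ∈ Λ, (X - C μ)) * X ^ 2 := by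
  set p : F[X] := ∏ μ ∈ Λ, (X - C μ) with hp
  -- key: aeval (ψ∘φ) (p * X) = 0
  have hker : (aeval (ψ ∘ₗ φ) (p * X) : Module.End F U) = 0 := by
    rw [← LinearMap.ker_eq_top, ← top_le_iff, ← hdiag]
    apply iSup_le
    intro μ
    intro x hx
    rcases eq_or_ne x 0 with rfl | hx0
    · exact Submodule.zero_mem _
    have hev : Module.End.HasEigenvector (ψ ∘ₗ φ) μ x := ⟨hx, hx0⟩
    rw [LinearMap.mem_ker, Module.End.aeval_apply_of_hasEigenvector hev]
    have : (p * X).eval μ = 0 := by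
      rcases eq_or_ne μ 0 with rfl | hμ
      · simp
      · have hmem : μ ∈ Λ := (hΛ μ hμ).mp (Module.End.hasEigenvalue_of_hasEigenvector hev)
        rw [eval_mul, hp, eval_prod]
        apply mul_eq_zero_of_left
        exact Finset.prod_eq_zero hmem (by simp)
    rw [this, zero_smul]
  -- now compute aeval (φ∘ψ) (p * X^2)
  apply minpoly.dvd
  have key : (aeval (φ ∘ₗ ψ) (p * X ^ 2) : Module.End F V)
      = φ ∘ₗ ((aeval (ψ ∘ₗ φ) (p * X) : Module.End F U) ∘ₗ ψ) := by
    have h1 : p * X ^ 2 = X * (p * X) := by ring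
    rw [h1, map_mul, aeval_X]
    have h2 := aeval_comp ψ φ (p * X)
    calc (φ ∘ₗ ψ) * (aeval (φ ∘ₗ ψ) (p * X) : Module.End F V)
        = φ ∘ₗ (ψ ∘ₗ ((aeval (φ ∘ₗ ψ) (p * X) : Module.End F V))) := by
          ext x; simp [Module.End.mul_apply, LinearMap.comp_apply]
      _ = _ := by
          ext x
          have := congrFun (congrArg DFunLike.coe h2) x
          simp only [LinearMap.comp_apply] at this ⊢
          rw [this]
  rw [key, hker]
  ext x; simp
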